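/- In the pf-sLDA single-document setup, assume there exists ξ* : Fin N → Bool with q(ξ*)·L(ξ*) = ∑_ξ q(ξ)·L(ξ) and ∑_ξ q(ξ)·L(ξ) > 0 (the posterior over switch configurations is a point mass at ξ*). Then for every word position n: if ξ* n = true then π (w n) = 0, and if ξ* n = false then β k (w n) = 0 for all k. In particular, β and π have disjoint supports over the words appearing in the document: β k (w n) · π (w n) = 0 for all k and n. -/

import Mathlib

open MeasureTheory

/-- If a continuous `F` is nonzero at some point of the simplex while
`F θ * ∑ k, θ k * c k = 0` for all `θ`, then all coefficients `c k` vanish. -/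
lemma pfslda_aux_vanish {K : ℕ} (c : Fin K → ℝ)
    (F : stdSimplex ℝ (Fin K) → ℝ) (hF : Continuous F)
    (θ0 : stdSimplex ℝ (Fin K)) (hθ0 : F θ0 ≠ 0)
    (hzero : ∀ θ : stdSimplex ℝ (Fin K),
      F θ * ∑ k, (θ : Fin K → ℝ) k * c k = 0) :
    ∀ k, c k = 0 := by
  intro k
  -- vertex e_k
  set e : Fin K → ℝ := fun k' => if k' = k then 1 else 0 with he
  have heΔ : e ∈ stdSimplex ℝ (Fin K) := by
    constructor
    · intro i; simp only [he]; positivity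
    · simp [he]
  have hproj : Continuous fun t : ℝ => max 0 (min 1 t) :=
    continuous_const.max (continuous_const.min continuous_id)
  have hmem : ∀ t : ℝ,
      (1 - max 0 (min 1 t)) • (θ0 : Fin K → ℝ) + (max 0 (min 1 t)) • e
        ∈ stdSimplex ℝ (Fin K) := by
    intro t
    have h0 : (0:ℝ) ≤ max 0 (min 1 t) := le_max_left _ _
    have h1 : max 0 (min 1 t) ≤ 1 := by
      rcases le_total (min 1 t) 0 with h | h
      · simpa using max_le le_rfl (h.trans zero_le_one)
      · exact max_le zero_le_one (min_le_left _ _)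
    exact (convex_stdSimplex ℝ (Fin K)) θ0.2 heΔ (by linarith) h0 (by ring)
  set Γ : ℝ → stdSimplex ℝ (Fin K) := fun t =>
    ⟨(1 - max 0 (min 1 t)) • (θ0 : Fin K → ℝ) + (max 0 (min 1 t)) • e, hmem t⟩
    with hΓ
  have hΓcont : Continuous Γ := by
    apply Continuous.subtype_mk
    exact ((continuous_const.sub hproj).smul continuous_const).add
      (hproj.smul continuous_const)
  have hΓ0 : Γ 0 = θ0 := by
    apply Subtype.ext
    simp [hΓ]
    rfl
  set ψ : ℝ → ℝ := fun t => F (Γ t) with hψ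
  have hψcont : Continuous ψ := hF.comp hΓcont
  have hψ0 : ψ 0 ≠ 0 := by simpa [hψ, hΓ0] using hθ0
  have hopen : IsOpen (ψ ⁻¹' {(0:ℝ)}ᶜ) := (isOpen_compl_singleton).preimage hψcont
  rcases Metric.isOpen_iff.1 hopen 0 hψ0 with ⟨ε, hε, hball⟩
  set t0 : ℝ := min (ε/2) 1 with ht0
  have ht0pos : 0 < t0 := lt_min (by linarith) one_pos
  have ht0le1 : t0 ≤ 1 := min_le_right _ _
  have ht0ball : t0 ∈ Metric.ball (0:ℝ) ε := by
    simp only [Metric.mem_ball, Real.dist_eq, sub_zero, abs_of_pos ht0pos]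
    calc t0 ≤ ε/2 := min_le_left _ _
      _ < ε := by linarith
  have hFt0 : F (Γ t0) ≠ 0 := hball ht0ball
  have hprojt0 : max 0 (min 1 t0) = t0 := by
    rw [min_eq_right ht0le1, max_eq_right ht0pos.le]
  -- sums
  have hS : ∑ k', (θ0 : Fin K → ℝ) k' * c k' = 0 := by
    rcases mul_eq_zero.1 (hzero θ0) with h | h
    · exact absurd h hθ0
    · exact h
  have hsum : ∑ k', ((Γ t0 : Fin K → ℝ)) k' * c k' = 0 := by
    rcases mul_eq_zero.1 (hzero (Γ t0)) with h | h
    · exact absurd h hFt0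
    · exact h
  have hexpand : ∑ k', ((Γ t0 : Fin K → ℝ)) k' * c k'
      = (1 - t0) * (∑ k', (θ0 : Fin K → ℝ) k' * c k') + t0 * c k := by
    simp only [hΓ, hprojt0, Pi.add_apply, Pi.smul_apply, smul_eq_mul]
    show ∑ k', ((1 - t0) * (θ0 : Fin K → ℝ) k' + t0 * e k') * c k'
      = (1 - t0) * (∑ k', (θ0 : Fin K → ℝ) k' * c k') + t0 * c k
    rw [Finset.sum_congr rfl (fun k' _ => by ring :
      ∀ k' ∈ Finset.univ, ((1 - t0) * (θ0 : Fin K → ℝ) k' + t0 * e k') * c k'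
        = (1 - t0) * ((θ0 : Fin K → ℝ) k' * c k') + t0 * (e k' * c k')),
      Finset.sum_add_distrib, ← Finset.mul_sum, ← Finset.mul_sum]
    congr 1
    congr 1
    simp [he, ite_mul]
  rw [hexpand, hS] at hsum
  have : t0 * c k = 0 := by linarith
  exact (mul_eq_zero.1 this).resolve_left (ne_of_gt ht0pos)

/-- In the pf-sLDA single-document setup, if the posterior over switch
configurations is a point mass at `ξ*`, then whenever `ξ* n = true` we have
`π (w n) = 0`, and whenever `ξ* n = false` we have `β k (w n) = 0` for all `k`.
In particular `β` and `π` have disjoint supports over the words appearing in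
the document. -/
theorem pfslda_point_mass_disjoint_supports
    (V K N : ℕ) (hV : 1 ≤ V) (hN : 1 ≤ N)
    (β : Fin K → Fin V → ℝ) (π : Fin V → ℝ)
    (hβnn : ∀ k v, 0 ≤ β k v) (hβsum : ∀ k, ∑ v, β k v = 1)
    (hπnn : ∀ v, 0 ≤ π v) (hπsum : ∑ v, π v = 1)
    (p : ℝ) (hp : p ∈ Set.Ioo (0 : ℝ) 1)
    (w : Fin N → Fin V)
    (μ : Measure (stdSimplex ℝ (Fin K))) [IsProbabilityMeasure μ]
    [μ.IsOpenPosMeasure]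
    (f : stdSimplex ℝ (Fin K) → ℝ) (hf : Continuous f) (hfpos : ∀ θ, 0 < f θ)
    (a : Fin N → stdSimplex ℝ (Fin K) → ℝ)
    (ha : ∀ n θ, a n θ = ∑ k, (θ : Fin K → ℝ) k * β k (w n))
    (q : (Fin N → Bool) → ℝ)
    (hq : ∀ ξ, q ξ = ∏ n, (if ξ n then p else 1 - p))
    (L : (Fin N → Bool) → ℝ)
    (hL : ∀ ξ, L ξ = ∫ θ, f θ * ∏ n, (if ξ n then a n θ else π (w n)) ∂μ)
    (ξstar : Fin N → Bool)
    (hpoint : q ξstar * L ξstar = ∑ ξ : Fin N → Bool, q ξ * L ξ)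
    (hZpos : 0 < ∑ ξ : Fin N → Bool, q ξ * L ξ) :
    (∀ n, (ξstar n = true → π (w n) = 0) ∧
        (ξstar n = false → ∀ k, β k (w n) = 0)) ∧
      (∀ k n, β k (w n) * π (w n) = 0) := by
  -- basic positivity / bounds
  obtain ⟨hp0, hp1⟩ := hp
  have hqpos : ∀ ξ, 0 < q ξ := by
    intro ξ; rw [hq]
    exact Finset.prod_pos fun n _ => by split <;> linarith
  have hacont : ∀ n, Continuous (a n) := by
    intro n
    have : a n = fun θ : stdSimplex ℝ (Fin K) =>
        ∑ k, (θ : Fin K → ℝ) k * β k (w n) := funext fun θ => ha n θ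
    rw [this]
    exact continuous_finset_sum _ fun k _ =>
      ((continuous_apply k).comp continuous_subtype_val).mul continuous_const
  have hann : ∀ n θ, 0 ≤ a n θ := by
    intro n θ; rw [ha]
    exact Finset.sum_nonneg fun k _ => mul_nonneg (θ.2.1 k) (hβnn k (w n))
  have hale1 : ∀ n θ, a n θ ≤ 1 := by
    intro n θ; rw [ha]
    calc ∑ k, (θ : Fin K → ℝ) k * β k (w n)
        ≤ ∑ k, (θ : Fin K → ℝ) k * 1 := by
          apply Finset.sum_le_sum
          intro k _
          have hβle1 : β k (w n) ≤ 1 := by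
            rw [← hβsum k]
            exact Finset.single_le_sum (fun v _ => hβnn k v) (Finset.mem_univ _)
          exact mul_le_mul_of_nonneg_left hβle1 (θ.2.1 k)
      _ = 1 := by simp [θ.2.2]
  have hπle1 : ∀ v, π v ≤ 1 := by
    intro v; rw [← hπsum]
    exact Finset.single_le_sum (fun v' _ => hπnn v') (Finset.mem_univ _)
  -- factor functions
  set fac : (Fin N → Bool) → Fin N → stdSimplex ℝ (Fin K) → ℝ :=
    fun ξ n θ => if ξ n then a n θ else π (w n) with hfac
  have hfacnn : ∀ ξ n θ, 0 ≤ fac ξ n θ := by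
    intro ξ n θ; simp only [hfac]; split
    · exact hann n θ
    · exact hπnn (w n)
  have hfacle1 : ∀ ξ n θ, fac ξ n θ ≤ 1 := by
    intro ξ n θ; simp only [hfac]; split
    · exact hale1 n θ
    · exact hπle1 (w n)
  have hfaccont : ∀ ξ n, Continuous (fac ξ n) := by
    intro ξ n; simp only [hfac]; split
    · exact hacont n
    · exact continuous_const
  -- integrability of continuous functions on the simplex
  have hint : ∀ g : stdSimplex ℝ (Fin K) → ℝ, Continuous g → Integrable g μ := by
    intro g hg
    exact hg.integrable_of_hasCompactSupport
      ((isClosed_tsupport g).isCompact)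
  -- L is nonneg
  have hLnn : ∀ ξ, 0 ≤ L ξ := by
    intro ξ; rw [hL]
    apply integral_nonneg
    intro θ
    exact mul_nonneg (hfpos θ).le (Finset.prod_nonneg fun n _ => hfacnn ξ n θ)
  -- L vanishes away from ξstar
  have hLzero : ∀ ξ, ξ ≠ ξstar → L ξ = 0 := by
    intro ξ hξ
    have hsplit : ∑ ξ' : Fin N → Bool, q ξ' * L ξ'
        = q ξstar * L ξstar + ∑ ξ' ∈ Finset.univ.erase ξstar, q ξ' * L ξ' :=
      (Finset.add_sum_erase _ _ (Finset.mem_univ _)).symm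
    have hrest : ∑ ξ' ∈ Finset.univ.erase ξstar, q ξ' * L ξ' = 0 := by
      rw [hsplit] at hpoint; linarith
    have h0 : q ξ * L ξ = 0 := by
      have := (Finset.sum_eq_zero_iff_of_nonneg
        (fun ξ' _ => mul_nonneg (hqpos ξ').le (hLnn ξ'))).1 hrest ξ
        (Finset.mem_erase.2 ⟨hξ, Finset.mem_univ _⟩)
      exact this
    exact (mul_eq_zero.1 h0).resolve_left (ne_of_gt (hqpos ξ))
  have hLstarpos : 0 < L ξstar := by
    have := hpoint ▸ hZpos
    nlinarith [hqpos ξstar, hLnn ξstar]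
  -- main per-position claim
  have main : ∀ n, (ξstar n = true → π (w n) = 0) ∧
      (ξstar n = false → ∀ k, β k (w n) = 0) := by
    intro n
    set ξ' : Fin N → Bool := Function.update ξstar n (!ξstar n) with hξ'
    have hξ'ne : ξ' ≠ ξstar := by
      intro h
      have := congrFun h n
      simp [hξ', Function.update_self] at this
    have hξ'n : ξ' n = !ξstar n := Function.update_self n _ _
    have hξ'm : ∀ m, m ≠ n → ξ' m = ξstar m := fun m hm =>
      Function.update_of_ne hm _ _
    set g : stdSimplex ℝ (Fin K) → ℝ :=
      fun θ => ∏ m ∈ Finset.univ.erase n, fac ξstar m θ with hg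
    have hgcont : Continuous g :=
      continuous_finset_prod _ fun m _ => hfaccont ξstar m
    have hgnn : ∀ θ, 0 ≤ g θ :=
      fun θ => Finset.prod_nonneg fun m _ => hfacnn ξstar m θ
    have hLstar_eq : L ξstar = ∫ θ, f θ * (fac ξstar n θ * g θ) ∂μ := by
      rw [hL]
      congr 1; funext θ
      rw [← Finset.mul_prod_erase _ _ (Finset.mem_univ n)]
    have hLξ'_eq : L ξ' = ∫ θ, f θ * (fac ξ' n θ * g θ) ∂μ := by
      rw [hL]
      congr 1; funext θ
      rw [← Finset.mul_prod_erase _ _ (Finset.mem_univ n)]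
      congr 1
      congr 1
      apply Finset.prod_congr rfl
      intro m hm
      rw [hfac]
      simp only [hξ'm m (Finset.mem_erase.1 hm).1]
    have hLξ'0 : L ξ' = 0 := hLzero ξ' hξ'ne
    -- ∫ f g ≥ L ξstar > 0
    have hintfg : Integrable (fun θ => f θ * g θ) μ := hint _ (hf.mul hgcont)
    have hintstar : Integrable (fun θ => f θ * (fac ξstar n θ * g θ)) μ :=
      hint _ (hf.mul ((hfaccont ξstar n).mul hgcont))
    have hintξ' : Integrable (fun θ => f θ * (fac ξ' n θ * g θ)) μ :=
      hint _ (hf.mul ((hfaccont ξ' n).mul hgcont))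
    have hfgpos : 0 < ∫ θ, f θ * g θ ∂μ := by
      have hmono : (∫ θ, f θ * (fac ξstar n θ * g θ) ∂μ) ≤ ∫ θ, f θ * g θ ∂μ := by
        apply integral_mono hintstar hintfg
        intro θ
        have h1 : fac ξstar n θ * g θ ≤ 1 * g θ :=
          mul_le_mul_of_nonneg_right (hfacle1 _ _ _) (hgnn θ)
        have := mul_le_mul_of_nonneg_left h1 (hfpos θ).le
        simpa using this
      linarith [hLstar_eq ▸ hLstarpos]
    rcases Bool.eq_false_or_eq_true (ξstar n) with hb | hb
    · -- ξstar n = true : show π (w n) = 0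
      refine ⟨fun _ => ?_, fun h => by simp [h] at hb⟩
      have hfacξ' : ∀ θ, fac ξ' n θ = π (w n) := by
        intro θ; simp [hfac, hξ'n, hb]
      have hz : (∫ θ, f θ * (π (w n) * g θ) ∂μ) = 0 := by
        rw [← hLξ'0, hLξ'_eq]
        congr 1; funext θ; rw [hfacξ' θ]
      have heq : (∫ θ, f θ * (π (w n) * g θ) ∂μ) = π (w n) * ∫ θ, f θ * g θ ∂μ := by
        rw [← integral_const_mul]
        congr 1; funext θ; ring
      rw [heq] at hz
      exact (mul_eq_zero.1 hz).resolve_right (ne_of_gt hfgpos)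
    · -- ξstar n = false : show β k (w n) = 0 for all k
      refine ⟨fun h => by simp [h] at hb, fun _ => ?_⟩
      -- L ξ' = ∫ f * a n * g = 0
      have hfacξ' : ∀ θ, fac ξ' n θ = a n θ := by
        intro θ; simp [hfac, hξ'n, hb]
      have hzero_int : (∫ θ, f θ * (a n θ * g θ) ∂μ) = 0 := by
        rw [← hLξ'0, hLξ'_eq]
        congr 1; funext θ; rw [hfacξ' θ]
      -- the nonneg continuous integrand vanishes identically
      have hptwise : ∀ θ, f θ * (a n θ * g θ) = 0 := by
        by_contra hcon
        push_neg at hcon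
        obtain ⟨θ1, hθ1⟩ := hcon
        have hnn : ∀ θ, 0 ≤ f θ * (a n θ * g θ) := fun θ =>
          mul_nonneg (hfpos θ).le (mul_nonneg (hann n θ) (hgnn θ))
        have hopen : IsOpen (Function.support fun θ => f θ * (a n θ * g θ)) := by
          have hc : Continuous fun θ => f θ * (a n θ * g θ) :=
            hf.mul ((hacont n).mul hgcont)
          exact isOpen_compl_singleton.preimage hc
        have hpos : 0 < μ (Function.support fun θ => f θ * (a n θ * g θ)) :=
          hopen.measure_pos μ ⟨θ1, hθ1⟩
        have := (integral_pos_iff_support_of_nonneg hnn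
          (hint _ (hf.mul ((hacont n).mul hgcont)))).2 hpos
        rw [hzero_int] at this
        exact lt_irrefl 0 this
      -- find θ0 where f*g ≠ 0
      have hsupp_pos : 0 < μ (Function.support fun θ => f θ * g θ) := by
        refine (integral_pos_iff_support_of_nonneg ?_ hintfg).1 hfgpos
        exact fun θ => mul_nonneg (hfpos θ).le (hgnn θ)
      obtain ⟨θ0, hθ0⟩ : (Function.support fun θ => f θ * g θ).Nonempty := by
        rw [Set.nonempty_iff_ne_empty]
        intro h
        rw [h] at hsupp_pos
        simp at hsupp_pos
      -- apply vertex lemma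
      have := pfslda_aux_vanish (fun k => β k (w n)) (fun θ => f θ * g θ)
        (hf.mul hgcont) θ0 hθ0 ?_
      · exact this
      · intro θ
        have h := hptwise θ
        rw [ha] at h
        show f θ * g θ * ∑ k, (θ : Fin K → ℝ) k * β k (w n) = 0
        linear_combination h
  refine ⟨main, fun k n => ?_⟩
  rcases Bool.eq_false_or_eq_true (ξstar n) with hb | hb
  · rw [(main n).1 hb, mul_zero]
  · rw [(main n).2 hb k, zero_mul]
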